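/- Let M be a countable Urysohn space with finite distance set D, A a finite subset of M, and p₀, p₁, p₂ three Katětov functions with domain A. Then the triple (p₀, p₁, p₂) satisfies the triangle inequality under d_min: d_min(p₀,p₁) + d_min(p₀,p₂) ≥ d_min(p₁,p₂). -/
import Mathlib

namespace Sauer

def IsMetricTriple (a b c : ℝ) : Prop := a ≤ b + c ∧ b ≤ a + c ∧ c ≤ a + b

def IsUniversalDist (D : Set ℝ) : Prop :=
  D.Finite ∧ (0 : ℝ) ∈ D ∧ (∀ d ∈ D, 0 ≤ d) ∧
    ∀ s x₀ y₀ x₁ y₁ : ℝ, s ∈ D → x₀ ∈ D → y₀ ∈ D → x₁ ∈ D → y₁ ∈ D →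
      0 < x₀ → 0 < y₀ → 0 < x₁ → 0 < y₁ →
      IsMetricTriple x₀ y₀ s → IsMetricTriple x₁ y₁ s →
      ∃ t ∈ D, 0 < t ∧ IsMetricTriple x₀ x₁ t ∧ IsMetricTriple y₀ y₁ t

open Classical in
noncomputable def dsucc (D : Set ℝ) (r : ℝ) : ℝ :=
  if ({s | s ∈ D ∧ r < s}).Nonempty then sInf {s | s ∈ D ∧ r < s} else r

noncomputable def dpred (D : Set ℝ) (r : ℝ) : ℝ := sSup {s | s ∈ D ∧ s < r}

def IsBlock (D B : Set ℝ) : Prop :=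
  ∃ (n : ℕ) (b : ℕ → ℝ),
    B = {x | ∃ i, i ≤ n ∧ x = b i} ∧
    (∀ i ≤ n, b i ∈ D) ∧ 0 < b 0 ∧
    (∀ i < n, b i < b (i + 1)) ∧
    (∀ y ∈ D, y < b 0 → 2 * y < b 0) ∧
    (∀ i < n, b (i + 1) = dsucc D (b i)) ∧
    (∀ i < n, b (i + 1) ≤ b i + b 0)

def IsJump (D : Set ℝ) (r : ℝ) : Prop := r ∈ D ∧ ∀ s ∈ D, r < s → 2 * r < s

structure Katetov (D : Set ℝ) (M : Type) [MetricSpace M] where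
  dom : Finset M
  f : M → ℝ
  mem : ∀ x ∈ dom, f x ∈ D
  pos : ∀ x ∈ dom, 0 < f x
  ineq1 : ∀ x ∈ dom, ∀ y ∈ dom, |f x - f y| ≤ dist x y
  ineq2 : ∀ x ∈ dom, ∀ y ∈ dom, dist x y ≤ f x + f y

variable {D : Set ℝ} {M : Type} [MetricSpace M]

def orb (t : Katetov D M) : Set M :=
  {y | y ∉ t.dom ∧ ∀ x ∈ t.dom, dist y x = t.f x}

noncomputable def rank (t : Katetov D M) : ℝ := sInf (t.f '' ↑t.dom)

def orbDistSet (s t : Katetov D M) : Set ℝ :=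
  {m | ∃ x ∈ orb s, ∃ y ∈ orb t, dist x y = m}

noncomputable def dminK (s t : Katetov D M) : ℝ := sInf (orbDistSet s t)

noncomputable def dmin (A B : Set M) : ℝ := sInf {d | ∃ x ∈ A, ∃ y ∈ B, dist x y = d}

def IsHomogeneous (M : Type) [MetricSpace M] : Prop :=
  ∀ (A : Finset M) (f : M → M),
    (∀ x ∈ A, ∀ y ∈ A, dist (f x) (f y) = dist x y) →
    ∃ g : M ≃ᵢ M, ∀ x ∈ A, g x = f x

def IsUrysohn (D : Set ℝ) (M : Type) [MetricSpace M] : Prop :=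
  Countable M ∧ (∀ x y : M, dist x y ∈ D) ∧ IsHomogeneous M ∧
    ∀ (N : Type) [MetricSpace N], Finite N → (∀ x y : N, dist x y ∈ D) →
      ∃ f : N → M, Isometry f

/-! ### Auxiliary material -/

/-- The distance on the one-point extension of the domain of a Katětov function. -/
noncomputable def extDist (p : Katetov D M) :
    Option {x // x ∈ p.dom} → Option {x // x ∈ p.dom} → ℝ
  | some a, some b => dist (a : M) (b : M)
  | some a, none => p.f a
  | none, some b => p.f b
  | none, none => 0

/-- The one-point extension as a metric space. -/
noncomputable def extMS (p : Katetov D M) : MetricSpace (Option {x // x ∈ p.dom}) where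
  dist := extDist p
  dist_self := by
    rintro (_ | a)
    · rfl
    · exact dist_self (a : M)
  dist_comm := by
    rintro (_ | a) (_ | b)
    · rfl
    · rfl
    · rfl
    · exact dist_comm (a : M) (b : M)
  dist_triangle := by
    rintro (_ | a) (_ | b) (_ | c)
    · show (0:ℝ) ≤ 0 + 0; norm_num
    · show p.f c ≤ 0 + p.f c; norm_num
    · show (0:ℝ) ≤ p.f b + p.f b
      have := p.pos b b.2; linarith
    · show p.f c ≤ p.f b + dist (b : M) c
      have h := p.ineq1 c c.2 b b.2
      have h2 := abs_le.1 h
      have := dist_comm (c : M) (b : M)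
      linarith [h2.2]
    · show p.f a ≤ p.f a + 0; norm_num
    · show dist (a : M) c ≤ p.f a + p.f c
      exact p.ineq2 a a.2 c c.2
    · show p.f a ≤ dist (a : M) b + p.f b
      have h := abs_le.1 (p.ineq1 a a.2 b b.2)
      linarith [h.2]
    · exact dist_triangle (a : M) b c
  eq_of_dist_eq_zero := by
    rintro (_ | a) (_ | b) h
    · rfl
    · exact absurd h.symm (ne_of_lt (p.pos b b.2))
    · exact absurd h.symm (ne_of_lt (p.pos a a.2))
    · exact congrArg _ (Subtype.ext (eq_of_dist_eq_zero h))

/-- Every Katětov function over a Urysohn space is realized: its orbit is nonempty. -/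
lemma orb_nonempty (hD : IsUniversalDist D) (hM : IsUrysohn D M) (p : Katetov D M) :
    (orb p).Nonempty := by
  classical
  obtain ⟨_, hdistD, hhom, hext⟩ := hM
  letI := extMS p
  have hfin : Finite (Option {x // x ∈ p.dom}) := by infer_instance
  have hDd : ∀ x y : Option {x // x ∈ p.dom}, dist x y ∈ D := by
    rintro (_ | a) (_ | b)
    · exact hD.2.1
    · exact p.mem b b.2
    · exact p.mem a a.2
    · exact hdistD (a : M) (b : M)
  obtain ⟨φ, hφ⟩ := hext (Option {x // x ∈ p.dom}) hfin hDd
  have hφd : ∀ x y, dist (φ x) (φ y) = dist x y := fun x y => hφ.dist_eq x y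
  have hφinj : Function.Injective φ := hφ.injective
  set h : M → M := fun z =>
    if hz : ∃ a : {x // x ∈ p.dom}, φ (some a) = z then (hz.choose : M) else z with hh
  set B : Finset M := p.dom.attach.image (fun a => φ (some a)) with hB
  have hmemB : ∀ z ∈ B, ∃ a : {x // x ∈ p.dom}, φ (some a) = z := by
    intro z hz
    simp only [hB, Finset.mem_image, Finset.mem_attach] at hz
    obtain ⟨a, -, ha⟩ := hz
    exact ⟨a, ha⟩
  have hval : ∀ (a : {x // x ∈ p.dom}), h (φ (some a)) = (a : M) := by
    intro a
    have hz : ∃ b : {x // x ∈ p.dom}, φ (some b) = φ (some a) := ⟨a, rfl⟩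
    have : hz.choose = a := by
      have := hz.choose_spec
      have := hφinj this
      exact Option.some_injective _ this
    simp only [hh, dif_pos hz, this]
  have hpres : ∀ x ∈ B, ∀ y ∈ B, dist (h x) (h y) = dist x y := by
    intro x hx y hy
    obtain ⟨a, ha⟩ := hmemB x hx
    obtain ⟨b, hb⟩ := hmemB y hy
    subst ha hb
    rw [hval a, hval b]
    rw [hφd]
    rfl
  obtain ⟨g, hg⟩ := hhom B h hpres
  refine ⟨g (φ none), ?_, ?_⟩
  · intro hy
    have hx : ∀ x ∈ p.dom, dist (g (φ none)) x = p.f x := by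
      intro x hx
      have hxB : φ (some ⟨x, hx⟩) ∈ B := by
        simp only [hB, Finset.mem_image, Finset.mem_attach]
        exact ⟨⟨x, hx⟩, trivial, rfl⟩
      have : g (φ (some ⟨x, hx⟩)) = x := by
        rw [hg _ hxB, hval ⟨x, hx⟩]
      calc dist (g (φ none)) x = dist (g (φ none)) (g (φ (some ⟨x, hx⟩))) := by rw [this]
        _ = dist (φ none) (φ (some ⟨x, hx⟩)) := g.dist_eq _ _
        _ = dist (none : Option {x // x ∈ p.dom}) (some ⟨x, hx⟩) := hφd _ _
        _ = p.f x := rfl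
    have h1 := hx _ hy
    rw [dist_self] at h1
    exact absurd h1.symm (ne_of_gt (p.pos _ hy))
  · intro x hx
    have hxB : φ (some ⟨x, hx⟩) ∈ B := by
      simp only [hB, Finset.mem_image, Finset.mem_attach]
      exact ⟨⟨x, hx⟩, trivial, rfl⟩
    have hgx : g (φ (some ⟨x, hx⟩)) = x := by
      rw [hg _ hxB, hval ⟨x, hx⟩]
    calc dist (g (φ none)) x = dist (g (φ none)) (g (φ (some ⟨x, hx⟩))) := by rw [hgx]
      _ = dist (φ none) (φ (some ⟨x, hx⟩)) := g.dist_eq _ _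
      _ = dist (none : Option {x // x ∈ p.dom}) (some ⟨x, hx⟩) := hφd _ _
      _ = p.f x := rfl

lemma dminK_mem (hD : IsUniversalDist D) (hM : IsUrysohn D M) (s t : Katetov D M)
    (hs : (orb s).Nonempty) (ht : (orb t).Nonempty) : dminK s t ∈ orbDistSet s t := by
  obtain ⟨x, hx⟩ := hs
  obtain ⟨y, hy⟩ := ht
  have hne : (orbDistSet s t).Nonempty := ⟨dist x y, x, hx, y, hy, rfl⟩
  have hsub : orbDistSet s t ⊆ D := by
    rintro m ⟨a, -, b, -, rfl⟩
    exact hM.2.1 a b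
  exact (hne.csInf_mem (hD.1.subset hsub))

theorem statement13 (D : Set ℝ) (hD : IsUniversalDist D) (M : Type) [MetricSpace M]
    (hM : IsUrysohn D M) (A : Finset M) (p₀ p₁ p₂ : Katetov D M)
    (h0 : p₀.dom = A) (h1 : p₁.dom = A) (h2 : p₂.dom = A) :
    dminK p₁ p₂ ≤ dminK p₀ p₁ + dminK p₀ p₂ := by
  classical
  have hne0 := orb_nonempty hD hM p₀
  have hne1 := orb_nonempty hD hM p₁
  have hne2 := orb_nonempty hD hM p₂
  obtain ⟨a₀, ha₀, b₁, hb₁, hd01⟩ := dminK_mem hD hM p₀ p₁ hne0 hne1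
  obtain ⟨a₀', ha₀', b₂, hb₂, hd02⟩ := dminK_mem hD hM p₀ p₂ hne0 hne2
  -- move a₀' to a₀ by a global isometry fixing A
  have ha₀'A : a₀' ∉ A := by rw [← h0]; exact ha₀'.1
  set f : M → M := fun z => if z = a₀' then a₀ else z with hf
  have hfa : f a₀' = a₀ := by simp [hf]
  have hfid : ∀ x ∈ A, f x = x := by
    intro x hx
    have hne : x ≠ a₀' := by rintro rfl; exact ha₀'A hx
    simp [hf, hne]
  have hpres : ∀ x ∈ insert a₀' A, ∀ y ∈ insert a₀' A, dist (f x) (f y) = dist x y := by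
    intro x hx y hy
    rcases Finset.mem_insert.1 hx with hxe | hxA
    · rcases Finset.mem_insert.1 hy with hye | hyA
      · rw [hxe, hye, hfa, dist_self, dist_self]
      · rw [hxe, hfa, hfid y hyA]
        have hA1 := ha₀.2 y (h0 ▸ hyA)
        have hA2 := ha₀'.2 y (h0 ▸ hyA)
        rw [hA1, hA2]
    · rcases Finset.mem_insert.1 hy with hye | hyA
      · rw [hye, hfa, hfid x hxA]
        have hA1 := ha₀.2 x (h0 ▸ hxA)
        have hA2 := ha₀'.2 x (h0 ▸ hxA)
        rw [dist_comm x a₀, dist_comm x a₀', hA1, hA2]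
      · rw [hfid x hxA, hfid y hyA]
  obtain ⟨g, hg⟩ := hM.2.2.1 (insert a₀' A) f hpres
  have hga : g a₀' = a₀ := by rw [hg _ (Finset.mem_insert_self _ _), hfa]
  have hgid : ∀ x ∈ A, g x = x := by
    intro x hx
    rw [hg _ (Finset.mem_insert_of_mem hx), hfid x hx]
  set b₂' := g b₂ with hb₂'
  have hb₂'orb : b₂' ∈ orb p₂ := by
    constructor
    · intro hmem
      have hx := h2 ▸ hmem
      have hdd : dist b₂' b₂' = p₂.f b₂' := by
        have : ∀ x ∈ p₂.dom, dist b₂' x = p₂.f x := by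
          intro x hx'
          have hxA : x ∈ A := h2 ▸ hx'
          calc dist b₂' x = dist (g b₂) (g x) := by rw [hgid x hxA]
            _ = dist b₂ x := g.dist_eq _ _
            _ = p₂.f x := hb₂.2 x hx'
        exact this _ hmem
      rw [dist_self] at hdd
      exact absurd hdd.symm (ne_of_gt (p₂.pos _ hmem))
    · intro x hx'
      have hxA : x ∈ A := h2 ▸ hx'
      calc dist b₂' x = dist (g b₂) (g x) := by rw [hgid x hxA]
        _ = dist b₂ x := g.dist_eq _ _
        _ = p₂.f x := hb₂.2 x hx'
  have hdist2 : dist a₀ b₂' = dminK p₀ p₂ := by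
    calc dist a₀ b₂' = dist (g a₀') (g b₂) := by rw [hga]
      _ = dist a₀' b₂ := g.dist_eq _ _
      _ = dminK p₀ p₂ := hd02
  have hmem : dist b₁ b₂' ∈ orbDistSet p₁ p₂ := ⟨b₁, hb₁, b₂', hb₂'orb, rfl⟩
  have hbdd : BddBelow (orbDistSet p₁ p₂) := by
    refine ⟨0, ?_⟩
    rintro m ⟨x, -, y, -, rfl⟩
    exact dist_nonneg
  calc dminK p₁ p₂ ≤ dist b₁ b₂' := csInf_le hbdd hmem
    _ ≤ dist b₁ a₀ + dist a₀ b₂' := dist_triangle _ _ _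
    _ = dminK p₀ p₁ + dminK p₀ p₂ := by rw [dist_comm b₁ a₀, hd01, hdist2]

end Sauer
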